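/- Let p ∈ ℚ \ {−1, 0, 1/2, 1/3} and c = (4p³ − 3p + 1)/p³. Then p⁶ · c(c − 4) = (p+1)(1 − 3p)(2p − 1)². Consequently, if (p+1)(1 − 3p) is not a square in ℚ, then c(c−4) is not a square in ℚ, so the roots of cX² − cX + 1 are irrational; moreover, setting q = (1 − p − 2p²)/p and letting α be such a root, one has (p + qα)³ = cα − 1. -/

import Mathlib

/-- Let `p ∈ ℚ \ {−1, 0, 1/2, 1/3}` and `c = (4p³ − 3p + 1)/p³`. Then
`p⁶·c(c−4) = (p+1)(1−3p)(2p−1)²`; consequently, if `(p+1)(1−3p)` is not a rational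
square, then `c(c−4)` is not a rational square, every root `α` of `cX² − cX + 1` in `ℚ̄`
is irrational, and with `q = (1 − p − 2p²)/p` one has `(p + qα)³ = cα − 1`. -/
theorem stmt_10 (p : ℚ) (hpm1 : p ≠ -1) (hp0 : p ≠ 0) (hp2 : p ≠ 1/2) (hp3 : p ≠ 1/3)
    (c : ℚ) (hc : c = (4*p^3 - 3*p + 1)/p^3)
    (q : ℚ) (hq : q = (1 - p - 2*p^2)/p) :
    p^6 * (c*(c - 4)) = (p + 1)*(1 - 3*p)*(2*p - 1)^2 ∧
    ((¬ ∃ s : ℚ, s^2 = (p + 1)*(1 - 3*p)) →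
      (¬ ∃ s : ℚ, s^2 = c*(c - 4)) ∧
      ∀ α : AlgebraicClosure ℚ,
        (c : AlgebraicClosure ℚ) * α^2 - (c : AlgebraicClosure ℚ) * α + 1 = 0 →
          α ∉ Set.range ((↑) : ℚ → AlgebraicClosure ℚ) ∧
          ((p : AlgebraicClosure ℚ) + (q : AlgebraicClosure ℚ) * α)^3 =
            (c : AlgebraicClosure ℚ) * α - 1) := by
  have hp2' : 2*p - 1 ≠ 0 := by
    intro h; apply hp2; linarith
  have h1 : p^6 * (c*(c - 4)) = (p + 1)*(1 - 3*p)*(2*p - 1)^2 := by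
    subst hc; field_simp; ring
  have hnsq : (¬ ∃ s : ℚ, s^2 = (p + 1)*(1 - 3*p)) → ¬ ∃ s : ℚ, s^2 = c*(c - 4) := by
    rintro hns ⟨s, hs⟩
    exact hns ⟨p^3 * s / (2*p - 1), by
      rw [div_pow, div_eq_iff (pow_ne_zero 2 hp2')]
      calc (p^3*s)^2 = p^6 * (c*(c-4)) := by rw [← hs]; ring
        _ = (p + 1)*(1 - 3*p)*(2*p - 1)^2 := h1⟩
  refine ⟨h1, fun hns => ⟨hnsq hns, fun α hα => ⟨?_, ?_⟩⟩⟩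
  · rintro ⟨r, rfl⟩
    have h' : c * r^2 - c * r + 1 = 0 := by
      have := hα
      push_cast at this
      exact_mod_cast this
    exact hnsq hns ⟨c*(2*r - 1), by linear_combination (4*c) * h'⟩
  · subst hq hc
    have hp0' : (p : AlgebraicClosure ℚ) ≠ 0 := by exact_mod_cast hp0
    push_cast at hα ⊢
    field_simp at hα ⊢
    linear_combination ((-(2*(p:AlgebraicClosure ℚ)-1)*((p:AlgebraicClosure ℚ)+1)^2)*α
      + ((p:AlgebraicClosure ℚ)^3+1)) * hα
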